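/- Let q be a power of an odd prime. For any multiplicative characters A, B₁, B₂, C of 𝔽_q^× and any λ₁, λ₂ ∈ 𝔽_q, ℙ_D^{(2)}[A; B₁, B₂; C; λ₁, λ₂] = (−(AC)(−1)/(q−1)²) · Σ_{χ,ψ} (B₁χ choose χ)(B₂ψ choose ψ)(Aχψ choose Cχψ)·χ(λ₁)ψ(λ₂) + δ(λ₂)·((AC)(−1)/(q−1)) · Σ_χ (B₁χ choose χ)(Aχ choose Cχ)·χ(λ₁) + δ(λ₁)·((AC)(−1)/(q−1)) · Σ_ψ (B₂ψ choose ψ)(Aψ choose Cψ)·ψ(λ₂) + δ(λ₁)δ(λ₂)·J(A, CĀ), where χ, ψ range over all multiplicative characters of 𝔽_q^×. -/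

import Mathlib

open Finset

/-- Jacobi sum `J(A,B) = Σ_x A(x) B(1-x)`. -/
noncomputable def jacobiSum' {F : Type} [Field F] [Fintype F] (A B : MulChar F ℂ) : ℂ :=
  ∑ x : F, A x * B (1 - x)

/-- One-variable finite-field period function `ℙ_D^{(1)}[A; B; C; λ]`. -/
noncomputable def P1 {F : Type} [Field F] [Fintype F] (A B C : MulChar F ℂ) (l : F) : ℂ :=
  ∑ y : F, A y * (C * A⁻¹) (1 - y) * B⁻¹ (1 - l * y)

/-- Two-variable finite-field Appell–Lauricella period function `ℙ_D^{(2)}`. -/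
noncomputable def P2 {F : Type} [Field F] [Fintype F] (A B₁ B₂ C : MulChar F ℂ) (l₁ l₂ : F) : ℂ :=
  ∑ y : F, A y * (C * A⁻¹) (1 - y) * B₁⁻¹ (1 - l₁ * y) * B₂⁻¹ (1 - l₂ * y)

/-- n-variable finite-field Appell–Lauricella period function `ℙ_D^{(n)}`. -/
noncomputable def PDn {F : Type} [Field F] [Fintype F] (n : ℕ) (A : MulChar F ℂ)
    (B : Fin n → MulChar F ℂ) (C : MulChar F ℂ) (l : Fin n → F) : ℂ :=
  ∑ y : F, A y * (C * A⁻¹) (1 - y) * ∏ i, (B i)⁻¹ (1 - l i * y)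

/-- Normalized two-variable Appell–Lauricella function `𝔽_D^{(2)}`. -/
noncomputable def F2 {F : Type} [Field F] [Fintype F] (A B₁ B₂ C : MulChar F ℂ) (l₁ l₂ : F) : ℂ :=
  P2 A B₁ B₂ C l₁ l₂ / jacobiSum' A (C * A⁻¹)

/-- Normalized n-variable Appell–Lauricella function `𝔽_D^{(n)}`. -/
noncomputable def FDn {F : Type} [Field F] [Fintype F] (n : ℕ) (A : MulChar F ℂ)
    (B : Fin n → MulChar F ℂ) (C : MulChar F ℂ) (l : Fin n → F) : ℂ :=
  PDn n A B C l / jacobiSum' A (C * A⁻¹)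

/-- Finite-field Gauss hypergeometric function `₂𝔽₁[A,B;C;λ] = ℙ_D^{(1)}[B;A;C;λ]/J(B,C B̄)`. -/
noncomputable def twoF1 {F : Type} [Field F] [Fintype F] (A B C : MulChar F ℂ) (l : F) : ℂ :=
  P1 B A C l / jacobiSum' B (C * B⁻¹)

open scoped Classical in
/-- `δ(x) = 1` if `x = 0`, else `0`. -/
noncomputable def deltaC {F : Type} [Field F] [Fintype F] (x : F) : ℂ :=
  if x = 0 then 1 else 0

noncomputable instance {F : Type} [Field F] [Fintype F] : Fintype (MulChar F ℂ) :=
  Fintype.ofFinite _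

/-- Character binomial coefficient `(A choose χ) = -χ(-1) J(A, χ̄)`. -/
noncomputable def charBinom {F : Type} [Field F] [Fintype F] (A χ : MulChar F ℂ) : ℂ :=
  -χ (-1) * jacobiSum' A χ⁻¹

section Aux
set_option linter.unusedSectionVars false

variable {F : Type} [Field F] [Fintype F]

lemma mc_sq (χ : MulChar F ℂ) : χ (-1) * χ (-1) = 1 := by
  rw [← map_mul, neg_mul_neg, one_mul, map_one]

lemma card_sub_one_ne : ((Fintype.card F : ℂ) - 1) ≠ 0 := by
  have : (1 : ℕ) < Fintype.card F := Fintype.one_lt_card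
  have : (Fintype.card F : ℂ) ≠ 1 := by exact_mod_cast Nat.ne_of_gt this
  exact sub_ne_zero.mpr this

open scoped Classical in
lemma sum_chars (a : F) :
    ∑ χ : MulChar F ℂ, χ a = if a = 1 then ((Fintype.card F : ℂ) - 1) else 0 := by
  have hE : NeZero ((Monoid.exponent Fˣ : ℕ) : ℂ) := by
    refine ⟨?_⟩
    have : Monoid.exponent Fˣ ≠ 0 :=
      Monoid.ExponentExists.exponent_ne_zero (Monoid.ExponentExists.of_finite)
    exact_mod_cast this
  split_ifs with ha
  · subst ha
    simp only [map_one, Finset.sum_const, Finset.card_univ, nsmul_eq_mul, mul_one]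
    have h1 : Nat.card (MulChar F ℂ) = Nat.card Fˣ :=
      MulChar.card_eq_card_units_of_hasEnoughRootsOfUnity F ℂ
    have h2 : Nat.card Fˣ = Fintype.card F - 1 := by
      rw [Nat.card_eq_fintype_card, Fintype.card_units]
    rw [← Nat.card_eq_fintype_card, h1, h2]
    have : (1:ℕ) ≤ Fintype.card F := Fintype.card_pos
    push_cast [Nat.cast_sub this]
    ring
  · obtain ⟨χ, hχ⟩ := MulChar.exists_apply_ne_one_of_hasEnoughRootsOfUnity F ℂ ha
    refine eq_zero_of_mul_eq_self_left hχ ?_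
    simp only [Finset.mul_sum, ← MulChar.mul_apply]
    exact Fintype.sum_bijective _ (Group.mulLeft_bijective χ) _ _ fun χ' ↦ rfl

open scoped Classical in
lemma key1 (B : MulChar F ℂ) (l : F) :
    ∑ χ : MulChar F ℂ, charBinom (B * χ) χ * χ l
      = ((Fintype.card F : ℂ) - 1) * (deltaC l - B⁻¹ (1 - l)) := by
  set c : ℂ := (Fintype.card F : ℂ) - 1 with hc
  have step1 : ∀ χ : MulChar F ℂ, charBinom (B * χ) χ * χ l
      = ∑ x : F, -(B x) * χ (-1 * x * (1 - x)⁻¹ * l) := by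
    intro χ
    simp only [charBinom, jacobiSum', Finset.mul_sum, Finset.sum_mul]
    refine Finset.sum_congr rfl fun x _ => ?_
    rw [MulChar.inv_apply', MulChar.mul_apply]
    simp only [map_mul]
    ring
  calc ∑ χ : MulChar F ℂ, charBinom (B * χ) χ * χ l
      = ∑ χ : MulChar F ℂ, ∑ x : F, -(B x) * χ (-1 * x * (1 - x)⁻¹ * l) :=
        Finset.sum_congr rfl fun χ _ => step1 χ
    _ = ∑ x : F, ∑ χ : MulChar F ℂ, -(B x) * χ (-1 * x * (1 - x)⁻¹ * l) := Finset.sum_comm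
    _ = ∑ x : F, -(B x) * (if -1 * x * (1 - x)⁻¹ * l = 1 then c else 0) := by
        refine Finset.sum_congr rfl fun x _ => ?_
        rw [← Finset.mul_sum, sum_chars]
    _ = c * (deltaC l - B⁻¹ (1 - l)) := ?_
  by_cases hl0 : l = 0
  · subst hl0
    rw [Finset.sum_eq_zero]
    · simp [deltaC]
    · intro x _
      have hcond : ¬ (-1 * x * (1 - x)⁻¹ * (0:F) = 1) := by simp
      rw [if_neg hcond, mul_zero]
  by_cases hl1 : l = 1
  · subst hl1
    rw [Finset.sum_eq_zero]
    · have hB0 : B⁻¹ ((1:F) - 1) = 0 := by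
        rw [sub_self]
        exact MulChar.map_nonunit _ (by simp)
      rw [hB0, deltaC, if_neg one_ne_zero]
      ring
    · intro x _
      have hcond : ¬ (-1 * x * (1 - x)⁻¹ * (1:F) = 1) := by
        by_cases hx : x = 1
        · subst hx; simp
        · have h1x : (1 : F) - x ≠ 0 := sub_ne_zero.mpr (Ne.symm hx)
          intro h
          field_simp at h
          exact one_ne_zero (by linear_combination -h : (1:F) = 0)
      rw [if_neg hcond, mul_zero]
  · -- l ≠ 0, l ≠ 1
    have h1l : (1 : F) - l ≠ 0 := sub_ne_zero.mpr (Ne.symm hl1)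
    rw [Finset.sum_eq_single ((1 - l)⁻¹)]
    · have harg : -1 * (1-l)⁻¹ * (1 - (1-l)⁻¹)⁻¹ * l = 1 := by
        have h2 : (1:F) - (1-l)⁻¹ = (-l) * (1-l)⁻¹ := by field_simp; ring
        rw [h2, mul_inv, inv_inv]
        field_simp
      rw [if_pos harg, deltaC, if_neg hl0, MulChar.inv_apply']
      ring
    · intro x _ hx
      have hcond : ¬ (-1 * x * (1 - x)⁻¹ * l = 1) := by
        intro h
        apply hx
        by_cases hx1 : x = 1
        · subst hx1; simp at h
        · have h1x : (1 : F) - x ≠ 0 := sub_ne_zero.mpr (Ne.symm hx1)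
          field_simp at h
          exact eq_inv_of_mul_eq_one_right (by linear_combination h)
      rw [if_neg hcond, mul_zero]
    · intro h
      exact absurd (Finset.mem_univ _) h

lemma key1' (B : MulChar F ℂ) (l y : F) (hy : y ≠ 0) :
    B⁻¹ (1 - l * y) = deltaC l
      - ((Fintype.card F : ℂ) - 1)⁻¹ * ∑ χ : MulChar F ℂ, charBinom (B * χ) χ * χ l * χ y := by
  classical
  have h := key1 B (l * y)
  have hd : deltaC (l * y) = deltaC l := by
    simp only [deltaC, mul_eq_zero]
    simp [hy]
  have hsplit : ∑ χ : MulChar F ℂ, charBinom (B * χ) χ * χ (l * y)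
      = ∑ χ : MulChar F ℂ, charBinom (B * χ) χ * χ l * χ y := by
    refine Finset.sum_congr rfl fun χ _ => ?_
    rw [map_mul]; ring
  rw [hsplit, hd] at h
  have hc := card_sub_one_ne (F := F)
  rw [h, ← mul_assoc, inv_mul_cancel₀ hc, one_mul]
  ring

lemma reflect (D E : MulChar F ℂ) :
    jacobiSum' D E = D (-1) * jacobiSum' D (D * E)⁻¹ := by
  classical
  have h0 : ∀ (G : MulChar F ℂ), G (0:F) = 0 := fun G => MulChar.map_nonunit _ (by simp)
  unfold jacobiSum'
  rw [Finset.mul_sum]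
  rw [← Finset.add_sum_erase _ _ (Finset.mem_univ (1:F)),
      ← Finset.add_sum_erase _ (fun x => D (-1) * (D x * (D*E)⁻¹ (1-x))) (Finset.mem_univ (1:F))]
  rw [sub_self, h0, h0]
  rw [mul_zero, mul_zero, zero_add, zero_add]
  refine Finset.sum_nbij' (i := fun x => x * (x - 1)⁻¹) (j := fun x => x * (x - 1)⁻¹)
    ?_ ?_ ?_ ?_ ?_
  · intro a ha
    rw [Finset.mem_erase] at ha ⊢
    refine ⟨?_, Finset.mem_univ _⟩
    intro h
    by_cases ha1 : a = 1
    · subst ha1; simp at h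
    · have : a - 1 ≠ 0 := sub_ne_zero.mpr ha1
      field_simp at h
      exact one_ne_zero (by linear_combination h : (1:F) = 0)
  · intro a ha
    rw [Finset.mem_erase] at ha ⊢
    refine ⟨?_, Finset.mem_univ _⟩
    intro h
    by_cases ha1 : a = 1
    · subst ha1; simp at h
    · have : a - 1 ≠ 0 := sub_ne_zero.mpr ha1
      field_simp at h
      exact one_ne_zero (by linear_combination h : (1:F) = 0)
  · intro a ha
    rw [Finset.mem_erase] at ha
    have h1 : a - 1 ≠ 0 := sub_ne_zero.mpr ha.1
    show a * (a-1)⁻¹ * (a * (a-1)⁻¹ - 1)⁻¹ = a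
    have h2 : a * (a-1)⁻¹ - 1 = (a-1)⁻¹ := by field_simp; ring
    rw [h2, inv_inv]
    field_simp
  · intro a ha
    rw [Finset.mem_erase] at ha
    have h1 : a - 1 ≠ 0 := sub_ne_zero.mpr ha.1
    show a * (a-1)⁻¹ * (a * (a-1)⁻¹ - 1)⁻¹ = a
    have h2 : a * (a-1)⁻¹ - 1 = (a-1)⁻¹ := by field_simp; ring
    rw [h2, inv_inv]
    field_simp
  · intro a ha
    rw [Finset.mem_erase] at ha
    have h1 : a - 1 ≠ 0 := sub_ne_zero.mpr ha.1
    have h2 : (1:F) - a * (a-1)⁻¹ = -(a-1)⁻¹ := by field_simp; ring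
    rw [h2]
    have h3 : (D * E)⁻¹ (-(a-1)⁻¹) = (D * E) (1 - a) := by
      rw [MulChar.inv_apply']
      congr 1
      rw [inv_neg, inv_inv]
      ring
    rw [h3, MulChar.mul_apply]
    have h4 : D a = D (-1) * (D (a * (a-1)⁻¹) * D (1 - a)) := by
      rw [← map_mul, ← map_mul]
      congr 1
      field_simp
      ring
    rw [h4]
    ring

lemma key2 (A C D : MulChar F ℂ) :
    jacobiSum' (A * D) (C * A⁻¹) = -((A * C) (-1)) * charBinom (A * D) (C * D) := by
  have h1 : (A * D) * (C * A⁻¹) = C * D := by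
    rw [mul_comm A D, mul_assoc, mul_comm C A⁻¹, ← mul_assoc A, mul_inv_cancel, one_mul,
      mul_comm D C]
  rw [reflect (A*D) (C*A⁻¹), h1, charBinom]
  have h2 : (A * D) (-1) = -((A*C) (-1)) * -(C*D) (-1) := by
    simp only [MulChar.mul_apply]
    have := mc_sq C
    linear_combination -(A (-1) * D (-1)) * this
  rw [h2]
  ring

lemma key3 (A C χ ψ : MulChar F ℂ) :
    ∑ y : F, A y * χ y * ψ y * (C * A⁻¹) (1 - y)
      = -((A * C) (-1)) * charBinom (A * χ * ψ) (C * χ * ψ) := by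
  have h := key2 A C (χ * ψ)
  rw [← mul_assoc, ← mul_assoc] at h
  rw [← h, jacobiSum']
  refine Finset.sum_congr rfl fun y _ => ?_
  simp only [MulChar.mul_apply]

lemma key3s (A C χ : MulChar F ℂ) :
    ∑ y : F, A y * χ y * (C * A⁻¹) (1 - y)
      = -((A * C) (-1)) * charBinom (A * χ) (C * χ) := by
  have h := key2 A C χ
  rw [← h, jacobiSum']
  refine Finset.sum_congr rfl fun y _ => ?_
  simp only [MulChar.mul_apply]

lemma Tsingle (A C B : MulChar F ℂ) (l : F) :
    ∑ y : F, A y * (C * A⁻¹) (1 - y) *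
        (∑ χ : MulChar F ℂ, charBinom (B * χ) χ * χ l * χ y)
      = -((A * C) (-1)) *
          ∑ χ : MulChar F ℂ, charBinom (B * χ) χ * charBinom (A * χ) (C * χ) * χ l := by
  calc ∑ y : F, A y * (C * A⁻¹) (1 - y) *
        (∑ χ : MulChar F ℂ, charBinom (B * χ) χ * χ l * χ y)
      = ∑ y : F, ∑ χ : MulChar F ℂ,
          (charBinom (B * χ) χ * χ l) * (A y * χ y * (C * A⁻¹) (1 - y)) := by
        refine Finset.sum_congr rfl fun y _ => ?_
        rw [Finset.mul_sum]
        exact Finset.sum_congr rfl fun χ _ => by ring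
    _ = ∑ χ : MulChar F ℂ,
          (charBinom (B * χ) χ * χ l) * ∑ y : F, A y * χ y * (C * A⁻¹) (1 - y) := by
        rw [Finset.sum_comm]
        exact Finset.sum_congr rfl fun χ _ => (Finset.mul_sum _ _ _).symm
    _ = ∑ χ : MulChar F ℂ,
          (charBinom (B * χ) χ * χ l) * (-((A * C) (-1)) * charBinom (A * χ) (C * χ)) :=
        Finset.sum_congr rfl fun χ _ => by rw [key3s]
    _ = -((A * C) (-1)) *
          ∑ χ : MulChar F ℂ, charBinom (B * χ) χ * charBinom (A * χ) (C * χ) * χ l := by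
        rw [Finset.mul_sum]
        exact Finset.sum_congr rfl fun χ _ => by ring

lemma Tdouble (A C B₁ B₂ : MulChar F ℂ) (l₁ l₂ : F) :
    ∑ y : F, A y * (C * A⁻¹) (1 - y) *
        (∑ χ : MulChar F ℂ, charBinom (B₁ * χ) χ * χ l₁ * χ y) *
        (∑ ψ : MulChar F ℂ, charBinom (B₂ * ψ) ψ * ψ l₂ * ψ y)
      = -((A * C) (-1)) *
          ∑ χ : MulChar F ℂ, ∑ ψ : MulChar F ℂ,
            charBinom (B₁ * χ) χ * charBinom (B₂ * ψ) ψ *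
              charBinom (A * χ * ψ) (C * χ * ψ) * χ l₁ * ψ l₂ := by
  calc ∑ y : F, A y * (C * A⁻¹) (1 - y) *
        (∑ χ : MulChar F ℂ, charBinom (B₁ * χ) χ * χ l₁ * χ y) *
        (∑ ψ : MulChar F ℂ, charBinom (B₂ * ψ) ψ * ψ l₂ * ψ y)
      = ∑ y : F, ∑ χ : MulChar F ℂ, ∑ ψ : MulChar F ℂ,
          (charBinom (B₁ * χ) χ * χ l₁ * (charBinom (B₂ * ψ) ψ * ψ l₂)) *
            (A y * χ y * ψ y * (C * A⁻¹) (1 - y)) := by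
        refine Finset.sum_congr rfl fun y _ => ?_
        rw [mul_assoc (A y * (C * A⁻¹) (1 - y)), Finset.sum_mul_sum, Finset.mul_sum]
        refine Finset.sum_congr rfl fun χ _ => ?_
        rw [Finset.mul_sum]
        exact Finset.sum_congr rfl fun ψ _ => by ring
    _ = ∑ χ : MulChar F ℂ, ∑ ψ : MulChar F ℂ,
          (charBinom (B₁ * χ) χ * χ l₁ * (charBinom (B₂ * ψ) ψ * ψ l₂)) *
            ∑ y : F, A y * χ y * ψ y * (C * A⁻¹) (1 - y) := by
        rw [Finset.sum_comm]
        refine Finset.sum_congr rfl fun χ _ => ?_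
        rw [Finset.sum_comm]
        exact Finset.sum_congr rfl fun ψ _ => (Finset.mul_sum _ _ _).symm
    _ = ∑ χ : MulChar F ℂ, ∑ ψ : MulChar F ℂ,
          (charBinom (B₁ * χ) χ * χ l₁ * (charBinom (B₂ * ψ) ψ * ψ l₂)) *
            (-((A * C) (-1)) * charBinom (A * χ * ψ) (C * χ * ψ)) :=
        Finset.sum_congr rfl fun χ _ => Finset.sum_congr rfl fun ψ _ => by rw [key3]
    _ = -((A * C) (-1)) *
          ∑ χ : MulChar F ℂ, ∑ ψ : MulChar F ℂ,
            charBinom (B₁ * χ) χ * charBinom (B₂ * ψ) ψ *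
              charBinom (A * χ * ψ) (C * χ * ψ) * χ l₁ * ψ l₂ := by
        rw [Finset.mul_sum]
        refine Finset.sum_congr rfl fun χ _ => ?_
        rw [Finset.mul_sum]
        exact Finset.sum_congr rfl fun ψ _ => by ring

end Aux

/-- binomial-coefficient representation of `ℙ_D^{(2)}`. -/
theorem statement_4 (F : Type) [Field F] [Fintype F] (hq : Odd (Fintype.card F))
    (A B₁ B₂ C : MulChar F ℂ) (l₁ l₂ : F) :
    P2 A B₁ B₂ C l₁ l₂ =
      -((A * C) (-1)) / ((Fintype.card F : ℂ) - 1) ^ 2 *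
          ∑ χ : MulChar F ℂ, ∑ ψ : MulChar F ℂ,
            charBinom (B₁ * χ) χ * charBinom (B₂ * ψ) ψ *
              charBinom (A * χ * ψ) (C * χ * ψ) * χ l₁ * ψ l₂ +
        deltaC l₂ * ((A * C) (-1) / ((Fintype.card F : ℂ) - 1)) *
          ∑ χ : MulChar F ℂ, charBinom (B₁ * χ) χ * charBinom (A * χ) (C * χ) * χ l₁ +
        deltaC l₁ * ((A * C) (-1) / ((Fintype.card F : ℂ) - 1)) *
          ∑ ψ : MulChar F ℂ, charBinom (B₂ * ψ) ψ * charBinom (A * ψ) (C * ψ) * ψ l₂ +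
        deltaC l₁ * deltaC l₂ * jacobiSum' A (C * A⁻¹) := by
  classical
  have hc : ((Fintype.card F : ℂ) - 1) ≠ 0 := card_sub_one_ne
  set t : ℂ := ((Fintype.card F : ℂ) - 1)⁻¹ with ht
  calc P2 A B₁ B₂ C l₁ l₂
      = ∑ y : F,
          (deltaC l₁ * deltaC l₂ * (A y * (C * A⁻¹) (1 - y))
          - deltaC l₁ * t * (A y * (C * A⁻¹) (1 - y) *
              (∑ ψ : MulChar F ℂ, charBinom (B₂ * ψ) ψ * ψ l₂ * ψ y))
          - deltaC l₂ * t * (A y * (C * A⁻¹) (1 - y) *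
              (∑ χ : MulChar F ℂ, charBinom (B₁ * χ) χ * χ l₁ * χ y))
          + t * t * (A y * (C * A⁻¹) (1 - y) *
              (∑ χ : MulChar F ℂ, charBinom (B₁ * χ) χ * χ l₁ * χ y) *
              (∑ ψ : MulChar F ℂ, charBinom (B₂ * ψ) ψ * ψ l₂ * ψ y))) := by
        rw [P2]
        refine Finset.sum_congr rfl fun y _ => ?_
        by_cases hy : y = 0
        · subst hy
          have hA0 : A (0:F) = 0 := MulChar.map_nonunit _ (by simp)
          rw [hA0]
          ring
        · rw [key1' B₁ l₁ y hy, key1' B₂ l₂ y hy, ← ht]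
          ring
    _ = deltaC l₁ * deltaC l₂ * (∑ y : F, A y * (C * A⁻¹) (1 - y))
          - deltaC l₁ * t * (∑ y : F, A y * (C * A⁻¹) (1 - y) *
              (∑ ψ : MulChar F ℂ, charBinom (B₂ * ψ) ψ * ψ l₂ * ψ y))
          - deltaC l₂ * t * (∑ y : F, A y * (C * A⁻¹) (1 - y) *
              (∑ χ : MulChar F ℂ, charBinom (B₁ * χ) χ * χ l₁ * χ y))
          + t * t * (∑ y : F, A y * (C * A⁻¹) (1 - y) *
              (∑ χ : MulChar F ℂ, charBinom (B₁ * χ) χ * χ l₁ * χ y) *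
              (∑ ψ : MulChar F ℂ, charBinom (B₂ * ψ) ψ * ψ l₂ * ψ y)) := by
        rw [Finset.sum_add_distrib, Finset.sum_sub_distrib, Finset.sum_sub_distrib,
          ← Finset.mul_sum, ← Finset.mul_sum, ← Finset.mul_sum, ← Finset.mul_sum]
    _ = _ := by
        rw [Tsingle A C B₂ l₂, Tsingle A C B₁ l₁, Tdouble A C B₁ B₂ l₁ l₂,
          show (∑ y : F, A y * (C * A⁻¹) (1 - y)) = jacobiSum' A (C * A⁻¹) from rfl, ht]
        field_simp
        ring
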